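/- Let Σ, Γ be d×d positive semidefinite real matrices and ε̃ > 0. Define G_Σ^Γ := 2Σ((Σ² + ε̃² I)^{1/2} + ε̃ I)^{-1} − 2Γ^{1/2}((Γ^{1/2} Σ Γ^{1/2} + ε̃² I)^{1/2} + ε̃ I)^{-1} Γ^{1/2}. Then every eigenvalue of G_Σ^Γ lies in the interval [−λ_max(Γ)/ε̃, 2]. -/

import Mathlib

open Matrix
open scoped MatrixOrder

namespace Stmt2Aux

variable {n : Type*} [Fintype n] [DecidableEq n]

lemma posSemidef_iff_eq_transpose_mul_self {M : Matrix n n ℝ} :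
    M.PosSemidef ↔ ∃ B : Matrix n n ℝ, M = Bᴴ * B := by
  refine ⟨fun hM => ⟨CFC.sqrt M, ?_⟩, fun ⟨B, hB⟩ => hB ▸ posSemidef_conjTranspose_mul_self B⟩
  rw [(CFC.sqrt_nonneg M).posSemidef.1.eq, CFC.sqrt_mul_sqrt_self M hM.nonneg]

lemma psd_smul {M : Matrix n n ℝ} (hM : M.PosSemidef) {c : ℝ} (hc : 0 ≤ c) :
    (c • M).PosSemidef := by
  refine PosSemidef.of_dotProduct_mulVec_nonneg ?_ fun x => ?_
  · unfold Matrix.IsHermitian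
    rw [conjTranspose_smul, hM.1.eq, star_trivial]
  · rw [smul_mulVec, dotProduct_smul, smul_eq_mul]
    exact mul_nonneg hc (hM.dotProduct_mulVec_nonneg x)

lemma psd_trace_nonneg {M : Matrix n n ℝ} (hM : M.PosSemidef) : 0 ≤ M.trace := by
  obtain ⟨B, rfl⟩ := posSemidef_iff_eq_transpose_mul_self.mp hM
  rw [Matrix.trace]
  refine Finset.sum_nonneg fun i _ => ?_
  simp only [Matrix.diag_apply, Matrix.mul_apply, Matrix.conjTranspose_apply]
  exact Finset.sum_nonneg fun j _ => star_mul_self_nonneg _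

lemma psd_trace_mul_nonneg {M N : Matrix n n ℝ} (hM : M.PosSemidef) (hN : N.PosSemidef) :
    0 ≤ (M * N).trace := by
  obtain ⟨B, rfl⟩ := posSemidef_iff_eq_transpose_mul_self.mp hM
  rw [Matrix.mul_assoc, Matrix.trace_mul_comm]
  exact psd_trace_nonneg (hN.mul_mul_conjTranspose_same B)

lemma psd_eq_zero_of_trace_eq_zero {M : Matrix n n ℝ} (hM : M.PosSemidef)
    (h : M.trace = 0) : M = 0 := by
  obtain ⟨B, rfl⟩ := posSemidef_iff_eq_transpose_mul_self.mp hM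
  rw [conjTranspose_mul_self_eq_zero (A := B)]
  have hdiag : ∀ i, (Bᴴ * B) i i = 0 := by
    intro i
    have hnn : ∀ i ∈ Finset.univ, (0:ℝ) ≤ (Bᴴ * B) i i := by
      intro i _
      simp only [Matrix.mul_apply, Matrix.conjTranspose_apply]
      exact Finset.sum_nonneg fun j _ => star_mul_self_nonneg _
    exact (Finset.sum_eq_zero_iff_of_nonneg hnn).mp h i (Finset.mem_univ i)
  ext p q
  have := hdiag q
  simp only [Matrix.mul_apply, Matrix.conjTranspose_apply, star_trivial] at this
  have := (Finset.sum_eq_zero_iff_of_nonneg (fun j _ => mul_self_nonneg (B j q))).mp this p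
    (Finset.mem_univ p)
  simpa [mul_self_eq_zero] using this

lemma posDef_of_isUnit_det {M : Matrix n n ℝ} (hM : M.PosSemidef) (h : IsUnit M.det) :
    M.PosDef := by
  refine ⟨hM.1, fun x hx => ?_⟩
  refine lt_of_le_of_ne (hM.2 x) fun heq => hx ?_
  have h0 : M *ᵥ x = 0 := (hM.dotProduct_mulVec_zero_iff x).mp (by
    rw [heq]; simp [dotProduct, mulVec, Finsupp.sum_fintype, Finset.mul_sum, mul_assoc])
  exact DFunLike.coe_injective ((Matrix.mulVec_injective_iff_isUnit.mpr (Matrix.isUnit_iff_isUnit_det M |>.mpr h)).eq_iff.mp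
    (by simpa using h0))


lemma commute_of_commute_sq {S N : Matrix n n ℝ} (hS : S.PosDef) (hN : N.IsHermitian)
    (h : N * (S * S) = (S * S) * N) : N * S = S * N := by
  set C := S * N - N * S with hCdef
  have h1 : S * C = -(C * S) := by
    simp only [hCdef, Matrix.mul_sub, Matrix.sub_mul, ← Matrix.mul_assoc]
    rw [Matrix.mul_assoc N S S, h]
    abel
  have hCH : Cᴴ = -C := by
    rw [hCdef, conjTranspose_sub, conjTranspose_mul, conjTranspose_mul, hS.1.eq, hN.eq, neg_sub]
  have hXpsd : (Cᴴ * S * C).PosSemidef := hS.posSemidef.conjTranspose_mul_mul_same C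
  have hX0 : Cᴴ * S * C = 0 := by
    apply psd_eq_zero_of_trace_eq_zero hXpsd
    have e1 : Cᴴ * S * C = -((Cᴴ * C) * S) := by
      rw [Matrix.mul_assoc, h1, Matrix.mul_neg, Matrix.mul_assoc]
    have ht : 0 ≤ ((Cᴴ * C) * S).trace :=
      psd_trace_mul_nonneg (posSemidef_conjTranspose_mul_self C) hS.posSemidef
    have ht2 : 0 ≤ (Cᴴ * S * C).trace := psd_trace_nonneg hXpsd
    rw [e1, trace_neg] at ht2 ⊢
    rw [neg_eq_zero]
    linarith
  -- sqrt of S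
  set V := CFC.sqrt S with hV
  have hVV : V * V = S := CFC.sqrt_mul_sqrt_self S hS.posSemidef.nonneg
  have hVH : Vᴴ = V := (CFC.sqrt_nonneg S).posSemidef.1
  have hVC : V * C = 0 := by
    have : (V * C)ᴴ * (V * C) = 0 := by
      rw [conjTranspose_mul, hVH, Matrix.mul_assoc, ← Matrix.mul_assoc V V C, hVV,
        ← Matrix.mul_assoc]
      exact hX0
    exact conjTranspose_mul_self_eq_zero.mp this
  have hSC : S * C = 0 := by rw [← hVV, Matrix.mul_assoc, hVC, Matrix.mul_zero]
  have hC0 : C = 0 := by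
    have hdet : IsUnit S.det := hS.isUnit.map (MonoidHom.id _) |>.map detMonoidHom
    calc C = (S⁻¹ * S) * C := by rw [Matrix.nonsing_inv_mul S hdet, Matrix.one_mul]
    _ = S⁻¹ * (S * C) := by rw [Matrix.mul_assoc]
    _ = 0 := by rw [hSC, Matrix.mul_zero]
  have := sub_eq_zero.mp hC0
  linear_combination (norm := noncomm_ring) -this

lemma posDef_smul_one {c : ℝ} (hc : 0 < c) : ((c • 1 : Matrix n n ℝ)).PosDef := by
  rw [smul_one_eq_diagonal]
  exact posDef_diagonal_iff.mpr fun _ => hc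

lemma psd_sub_largest_eigenvalue {H : Matrix n n ℝ} (hH : H.IsHermitian) :
    (((⨆ i, hH.eigenvalues i)) • (1 : Matrix n n ℝ) - H).PosSemidef := by
  set c := ⨆ i, hH.eigenvalues i with hc
  have hle : ∀ i, hH.eigenvalues i ≤ c := fun i =>
    le_ciSup (Set.Finite.bddAbove (Set.finite_range _)) i
  set U : Matrix n n ℝ := (hH.eigenvectorUnitary : Matrix n n ℝ) with hU
  have hUU : U * star U = 1 := (Matrix.mem_unitaryGroup_iff).mp hH.eigenvectorUnitary.2
  have key : c • (1 : Matrix n n ℝ) - H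
      = U * diagonal (fun i => c - hH.eigenvalues i) * star U := by
    have h1 : c • (1 : Matrix n n ℝ) = U * (c • 1) * star U := by
      rw [Matrix.mul_smul, Matrix.mul_one, Matrix.smul_mul, hUU]
    rw [show (diagonal (fun i => c - hH.eigenvalues i))
          = c • (1 : Matrix n n ℝ) - diagonal hH.eigenvalues by
        rw [smul_one_eq_diagonal, diagonal_sub],
      Matrix.mul_sub, Matrix.sub_mul, ← h1]
    congr 1
    conv_lhs => rw [hH.spectral_theorem]
    congr 1
  rw [key]
  have hdpsd : (diagonal (fun i => c - hH.eigenvalues i)).PosSemidef :=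
    posSemidef_diagonal_iff.mpr fun i => sub_nonneg.2 (hle i)
  have := hdpsd.mul_mul_conjTranspose_same U
  rwa [← Matrix.star_eq_conjTranspose] at this

end Stmt2Aux

open Stmt2Aux

/-- eigenvalues of
G_Σ^Γ = 2Σ((Σ²+ε̃²I)^{1/2}+ε̃I)⁻¹ − 2Γ^{1/2}((Γ^{1/2}ΣΓ^{1/2}+ε̃²I)^{1/2}+ε̃I)⁻¹Γ^{1/2}
lie in [−λ_max(Γ)/ε̃, 2]. -/
theorem stmt2 (d : ℕ) (A B : Matrix (Fin d) (Fin d) ℝ)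
    (hA : A.PosSemidef) (hB : B.PosSemidef) (ε : ℝ) (hε : 0 < ε)
    (R : Matrix (Fin d) (Fin d) ℝ) (hR : R.PosSemidef) (hR2 : R * R = B)
    (S₁ : Matrix (Fin d) (Fin d) ℝ) (hS₁ : S₁.PosSemidef)
    (hS₁2 : S₁ * S₁ = A * A + (ε ^ 2) • (1 : Matrix (Fin d) (Fin d) ℝ))
    (S₂ : Matrix (Fin d) (Fin d) ℝ) (hS₂ : S₂.PosSemidef)
    (hS₂2 : S₂ * S₂ = R * A * R + (ε ^ 2) • (1 : Matrix (Fin d) (Fin d) ℝ))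
    (μ : ℝ)
    (hμ : μ ∈ spectrum ℝ
        ((2 : ℝ) • (A * (S₁ + ε • (1 : Matrix (Fin d) (Fin d) ℝ))⁻¹)
          - (2 : ℝ) • (R * (S₂ + ε • (1 : Matrix (Fin d) (Fin d) ℝ))⁻¹ * R))) :
    μ ∈ Set.Icc (-(⨆ i, hB.1.eigenvalues i) / ε) 2 := by
  set c := ⨆ i, hB.1.eigenvalues i with hcdef
  set I : Matrix (Fin d) (Fin d) ℝ := 1 with hI
  set T₁ : Matrix (Fin d) (Fin d) ℝ := (S₁ + ε • I)⁻¹ with hT₁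
  set T₂ : Matrix (Fin d) (Fin d) ℝ := (S₂ + ε • I)⁻¹ with hT₂
  set M : Matrix (Fin d) (Fin d) ℝ := (2:ℝ) • (A * T₁) - (2:ℝ) • (R * T₂ * R) with hM
  -- basic positivity
  have hAA : (A * A).PosSemidef := by
    have := Matrix.posSemidef_conjTranspose_mul_self A
    rwa [hA.1.eq] at this
  have hε2 : (0:ℝ) < ε ^ 2 := by positivity
  have hS₁sqpd : (A * A + (ε ^ 2) • I).PosDef := Matrix.PosDef.posSemidef_add hAA (posDef_smul_one hε2)
  have hS₁pd : S₁.PosDef := by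
    refine posDef_of_isUnit_det hS₁ ?_
    have : S₁.det * S₁.det = (A * A + (ε ^ 2) • I).det := by
      rw [← det_mul, hS₁2]
    have hpos : (0:ℝ) < S₁.det * S₁.det := this ▸ hS₁sqpd.det_pos
    exact isUnit_iff_ne_zero.mpr fun h => by simp [h] at hpos
  have hcomm1 : A * S₁ = S₁ * A := by
    refine commute_of_commute_sq hS₁pd hA.1 ?_
    rw [hS₁2, Matrix.mul_add, Matrix.add_mul, Matrix.mul_smul, Matrix.smul_mul,
      Matrix.mul_one, Matrix.one_mul, ← Matrix.mul_assoc]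
  -- A * S₁ is psd via sqrt of A
  have hAS₁psd : (A * S₁).PosSemidef := by
    set W := CFC.sqrt A with hW
    have hWW : W * W = A := CFC.sqrt_mul_sqrt_self A hA.nonneg
    have hWH : Wᴴ = W := (CFC.sqrt_nonneg A).posSemidef.1
    have hWS₁ : W * S₁ = S₁ * W := by
      refine commute_of_commute_sq hS₁pd (CFC.sqrt_nonneg A).posSemidef.1 ?_
      rw [hS₁2, Matrix.mul_add, Matrix.add_mul, Matrix.mul_smul, Matrix.smul_mul,
        Matrix.mul_one, Matrix.one_mul]
      congr 1
      rw [← hWW]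
      simp only [Matrix.mul_assoc]
    have : (Wᴴ * S₁ * W).PosSemidef := hS₁.conjTranspose_mul_mul_same W
    rwa [hWH, show W * S₁ * W = A * S₁ from by
      rw [hWS₁, Matrix.mul_assoc, hWW, ← hcomm1]] at this
  -- invertibility facts for S₁ + εI
  have hεIpd : ((ε • I : Matrix (Fin d) (Fin d) ℝ)).PosDef := by
    rw [hI]; exact posDef_smul_one hε
  have hS₁εpd : (S₁ + ε • I).PosDef := hS₁pd.add_posSemidef hεIpd.posSemidef
  have hS₁εunit : IsUnit (S₁ + ε • I).det := isUnit_iff_ne_zero.mpr (ne_of_gt hS₁εpd.det_pos)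
  have hT₁pd : T₁.PosDef := hS₁εpd.inv
  have h1T₁ : (S₁ + ε • I) * T₁ = 1 := Matrix.mul_nonsing_inv _ hS₁εunit
  have hT₁1 : T₁ * (S₁ + ε • I) = 1 := Matrix.nonsing_inv_mul _ hS₁εunit
  have hT₁H : T₁ᴴ = T₁ := hT₁pd.1
  have hcommε : A * (S₁ + ε • I) = (S₁ + ε • I) * A := by
    rw [Matrix.mul_add, Matrix.add_mul, hcomm1, Matrix.mul_smul, Matrix.smul_mul, hI,
      Matrix.mul_one, Matrix.one_mul]
  -- A * T₁ is psd
  have hPin : (A * S₁ + ε • A).PosSemidef := hAS₁psd.add (psd_smul hA hε.le)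
  have hP : (A * T₁).PosSemidef := by
    have key : T₁ᴴ * (A * S₁ + ε • A) * T₁ = A * T₁ := by
      have e1 : A * S₁ + ε • A = A * (S₁ + ε • I) := by
        rw [Matrix.mul_add, Matrix.mul_smul, hI, Matrix.mul_one]
      rw [hT₁H, e1, hcommε, ← Matrix.mul_assoc T₁ (S₁ + ε • I) A, hT₁1, Matrix.one_mul]
    have := hPin.conjTranspose_mul_mul_same T₁
    rwa [key] at this
  -- 2I - 2AT₁ = 4ε (S₁+εI+A)⁻¹
  have hUpd : (S₁ + ε • I + A).PosDef := hS₁εpd.add_posSemidef hA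
  have hUunit : IsUnit (S₁ + ε • I + A).det := isUnit_iff_ne_zero.mpr (ne_of_gt hUpd.det_pos)
  have hAT₁A : A * T₁ * A = S₁ - ε • I := by
    have hexp : (S₁ + ε • I) * (S₁ - ε • I) = A * A := by
      simp only [Matrix.add_mul, Matrix.mul_sub, Matrix.sub_mul, Matrix.smul_mul,
        Matrix.mul_smul, hI, Matrix.mul_one, Matrix.one_mul, smul_smul, hS₁2]
      module
    have h2 : (S₁ + ε • I) * (A * T₁ * A) = (S₁ + ε • I) * (S₁ - ε • I) := by
      calc (S₁ + ε • I) * (A * T₁ * A) = ((S₁ + ε • I) * A) * (T₁ * A) := by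
            simp only [Matrix.mul_assoc]
      _ = (A * (S₁ + ε • I)) * (T₁ * A) := by rw [hcommε]
      _ = A * (((S₁ + ε • I) * T₁) * A) := by simp only [Matrix.mul_assoc]
      _ = A * A := by rw [h1T₁, Matrix.one_mul]
      _ = (S₁ + ε • I) * (S₁ - ε • I) := hexp.symm
    calc A * T₁ * A = (T₁ * (S₁ + ε • I)) * (A * T₁ * A) := by rw [hT₁1, Matrix.one_mul]
    _ = T₁ * ((S₁ + ε • I) * (A * T₁ * A)) := by simp only [Matrix.mul_assoc]
    _ = T₁ * ((S₁ + ε • I) * (S₁ - ε • I)) := by rw [h2]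
    _ = (T₁ * (S₁ + ε • I)) * (S₁ - ε • I) := by simp only [Matrix.mul_assoc]
    _ = S₁ - ε • I := by rw [hT₁1, Matrix.one_mul]
  have h2IP : (2:ℝ) • I - (2:ℝ) • (A * T₁) = (4*ε) • (S₁ + ε • I + A)⁻¹ := by
    have hATU : A * T₁ * (S₁ + ε • I + A) = A + (S₁ - ε • I) := by
      rw [Matrix.mul_add, Matrix.mul_assoc A T₁ (S₁ + ε • I), hT₁1, Matrix.mul_one, hAT₁A]
    have hXU : ((2:ℝ) • I - (2:ℝ) • (A * T₁)) * (S₁ + ε • I + A) = (4*ε) • I := by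
      rw [Matrix.sub_mul, Matrix.smul_mul, Matrix.smul_mul, hATU, hI, Matrix.one_mul]
      module
    have hU1 : (S₁ + ε • I + A) * (S₁ + ε • I + A)⁻¹ = 1 := Matrix.mul_nonsing_inv _ hUunit
    calc (2:ℝ) • I - (2:ℝ) • (A * T₁)
        = (((2:ℝ) • I - (2:ℝ) • (A * T₁)) * (S₁ + ε • I + A)) * (S₁ + ε • I + A)⁻¹ := by
          rw [Matrix.mul_assoc, hU1, Matrix.mul_one]
    _ = ((4*ε) • I) * (S₁ + ε • I + A)⁻¹ := by rw [hXU]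
    _ = (4*ε) • (S₁ + ε • I + A)⁻¹ := by rw [Matrix.smul_mul, hI, Matrix.one_mul]
  have h2IPpsd : ((2:ℝ) • I - (2:ℝ) • (A * T₁)).PosSemidef := by
    rw [h2IP]
    exact psd_smul hUpd.inv.posSemidef (by positivity)
  -- Q side
  have hS₂εpd : (S₂ + ε • I).PosDef := Matrix.PosDef.posSemidef_add hS₂ hεIpd
  have hS₂εunit : IsUnit (S₂ + ε • I).det := isUnit_iff_ne_zero.mpr (ne_of_gt hS₂εpd.det_pos)
  have hT₂pd : T₂.PosDef := hS₂εpd.inv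
  have h1T₂ : (S₂ + ε • I) * T₂ = 1 := Matrix.mul_nonsing_inv _ hS₂εunit
  have hT₂1 : T₂ * (S₂ + ε • I) = 1 := Matrix.nonsing_inv_mul _ hS₂εunit
  have hT₂H : T₂ᴴ = T₂ := hT₂pd.1
  have hRAR : (R * A * R).PosSemidef := by
    have := hA.conjTranspose_mul_mul_same R
    rwa [hR.1.eq] at this
  have hmid : (S₂ + ε • I) * (ε⁻¹ • I - (2:ℝ) • T₂) * (S₂ + ε • I) = ε⁻¹ • (R * A * R) := by
    have e1 : (S₂ + ε • I) * (ε⁻¹ • I - (2:ℝ) • T₂) = ε⁻¹ • (S₂ + ε • I) - (2:ℝ) • I := by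
      rw [Matrix.mul_sub, Matrix.mul_smul, Matrix.mul_smul, h1T₂, hI, Matrix.mul_one]
    have e2 : (S₂ + ε • I) * (S₂ + ε • I) = R * A * R + (2 * ε ^ 2) • I + (2*ε) • S₂ := by
      simp only [Matrix.add_mul, Matrix.mul_add, Matrix.smul_mul, Matrix.mul_smul, hI,
        Matrix.mul_one, Matrix.one_mul, smul_smul, hS₂2]
      module
    rw [e1, Matrix.sub_mul, Matrix.smul_mul, Matrix.smul_mul, e2, hI, Matrix.one_mul]
    rw [smul_add, smul_add, smul_smul, smul_smul, show ε⁻¹ * (2 * ε ^ 2) = 2*ε by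
        field_simp, show ε⁻¹ * (2*ε) = 2 by field_simp]
    module
  have hQin : ε⁻¹ • I - (2:ℝ) • T₂ = T₂ᴴ * (ε⁻¹ • (R * A * R)) * T₂ := by
    rw [hT₂H, ← hmid]
    calc ε⁻¹ • I - (2:ℝ) • T₂
        = (T₂ * (S₂ + ε • I)) * (ε⁻¹ • I - (2:ℝ) • T₂) * ((S₂ + ε • I) * T₂) := by
          rw [hT₂1, h1T₂, Matrix.one_mul, Matrix.mul_one]
    _ = T₂ * ((S₂ + ε • I) * (ε⁻¹ • I - (2:ℝ) • T₂) * (S₂ + ε • I)) * T₂ := by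
          simp only [Matrix.mul_assoc]
  have hQupsd : (ε⁻¹ • I - (2:ℝ) • T₂).PosSemidef := by
    rw [hQin]
    exact (psd_smul hRAR (inv_nonneg.mpr hε.le)).conjTranspose_mul_mul_same T₂
  have hQRpsd : (R * (ε⁻¹ • I - (2:ℝ) • T₂) * R).PosSemidef := by
    have := hQupsd.mul_mul_conjTranspose_same R
    rwa [hR.1.eq] at this
  have hBc : (c • I - B).PosSemidef := by
    rw [hcdef, hI]
    exact psd_sub_largest_eigenvalue hB.1
  have hQfinal : ((c/ε) • I - (2:ℝ) • (R * T₂ * R)).PosSemidef := by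
    have hdecomp : (c/ε) • I - (2:ℝ) • (R * T₂ * R)
        = ε⁻¹ • (c • I - B) + R * (ε⁻¹ • I - (2:ℝ) • T₂) * R := by
      rw [← hR2, Matrix.mul_sub, Matrix.sub_mul, Matrix.mul_smul, Matrix.smul_mul,
        Matrix.mul_smul, Matrix.smul_mul, hI, Matrix.mul_one, smul_sub, smul_smul,
        div_eq_inv_mul]
      simp only [Matrix.mul_assoc]
      module
    rw [hdecomp]
    exact (psd_smul hBc (inv_nonneg.mpr hε.le)).add hQRpsd
  have hQpsd : (R * T₂ * R).PosSemidef := by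
    have := hT₂pd.posSemidef.mul_mul_conjTranspose_same R
    rwa [hR.1.eq] at this
  -- extract an eigenvector
  rw [spectrum.mem_iff, Algebra.algebraMap_eq_smul_one] at hμ
  have hdet0 : (μ • (1 : Matrix (Fin d) (Fin d) ℝ) - M).det = 0 := by
    by_contra hne
    exact hμ ((Matrix.isUnit_iff_isUnit_det _).mpr (Ne.isUnit hne))
  obtain ⟨v, hv, hveq⟩ := Matrix.exists_mulVec_eq_zero_iff.mpr hdet0
  have hMv : M *ᵥ v = μ • v := by
    rw [Matrix.sub_mulVec, sub_eq_zero] at hveq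
    rw [← hveq, Matrix.smul_mulVec, Matrix.one_mulVec]
  have ha : 0 < v ⬝ᵥ v := by
    have := Matrix.dotProduct_self_star_pos_iff (v := v)
    simp only [star_trivial] at this
    exact this.mpr hv
  have quad : ∀ X : Matrix (Fin d) (Fin d) ℝ, X.PosSemidef → 0 ≤ v ⬝ᵥ (X *ᵥ v) := by
    intro X hX
    simpa using hX.dotProduct_mulVec_nonneg v
  have hqM : v ⬝ᵥ (M *ᵥ v) = μ * (v ⬝ᵥ v) := by
    rw [hMv, dotProduct_smul, smul_eq_mul]
  have hqsplit : μ * (v ⬝ᵥ v)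
      = 2 * (v ⬝ᵥ ((A * T₁) *ᵥ v)) - 2 * (v ⬝ᵥ ((R * T₂ * R) *ᵥ v)) := by
    rw [← hqM, hM]
    simp only [Matrix.sub_mulVec, dotProduct_sub, Matrix.smul_mulVec,
      dotProduct_smul, smul_eq_mul]
  have hup : 2 * (v ⬝ᵥ ((A * T₁) *ᵥ v)) ≤ 2 * (v ⬝ᵥ v) := by
    have h0 := quad _ h2IPpsd
    simpa only [Matrix.sub_mulVec, dotProduct_sub, sub_nonneg, hI, Matrix.smul_mulVec,
      Matrix.one_mulVec, dotProduct_smul, smul_eq_mul] using h0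
  have hlow : 2 * (v ⬝ᵥ ((R * T₂ * R) *ᵥ v)) ≤ (c/ε) * (v ⬝ᵥ v) := by
    have h0 := quad _ hQfinal
    simpa only [Matrix.sub_mulVec, dotProduct_sub, sub_nonneg, hI, Matrix.smul_mulVec,
      Matrix.one_mulVec, dotProduct_smul, smul_eq_mul] using h0
  have hP0 : 0 ≤ v ⬝ᵥ ((A * T₁) *ᵥ v) := quad _ hP
  have hQ0 : 0 ≤ v ⬝ᵥ ((R * T₂ * R) *ᵥ v) := quad _ hQpsd
  constructor
  · rw [neg_div]
    have h1 : (-(c/ε)) * (v ⬝ᵥ v) ≤ μ * (v ⬝ᵥ v) := by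
      rw [hqsplit]; nlinarith
    exact le_of_mul_le_mul_right h1 ha
  · have h1 : μ * (v ⬝ᵥ v) ≤ 2 * (v ⬝ᵥ v) := by
      rw [hqsplit]; nlinarith
    exact le_of_mul_le_mul_right h1 ha
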